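/- Let 0 < ε < 5/11 and let ℓ ∈ ℕ₀. For all p, μ, x, y > 0, |j_ℓ(px) j_ℓ(py) - j_ℓ(√μ x) j_ℓ(√μ y)| ≤ C |p - √μ|^ε (p^{-ε} + μ^{-ε/2}) (|j_ℓ(px)|^{1-11ε/5} + |j_ℓ(√μ x)|^{1-11ε/5}) (|j_ℓ(py)|^{1-11ε/5} + |j_ℓ(√μ y)|^{1-11ε/5}), where C depends only on ε. -/

import Mathlib

/-- The spherical Bessel function of the first kind `j_ℓ`, defined by
`j₀(x) = sin x / x`, `j₁(x) = sin x / x² - cos x / x` and the standard recurrence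
`j_{ℓ+1}(x) = (2ℓ+1)/x · j_ℓ(x) - j_{ℓ-1}(x)`. -/
noncomputable def sphericalBessel : ℕ → ℝ → ℝ
  | 0, x => if x = 0 then 1 else Real.sin x / x
  | 1, x => if x = 0 then 0 else Real.sin x / x ^ 2 - Real.cos x / x
  | (n + 2), x => if x = 0 then 0 else
      (2 * (n : ℝ) + 3) / x * sphericalBessel (n + 1) x - sphericalBessel n x


set_option maxHeartbeats 1000000

namespace SB
open scoped Nat

lemma sb_zero {x : ℝ} (hx : x ≠ 0) : sphericalBessel 0 x = Real.sin x / x := by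
  simp [sphericalBessel, hx]

lemma sb_one {x : ℝ} (hx : x ≠ 0) :
    sphericalBessel 1 x = Real.sin x / x ^ 2 - Real.cos x / x := by
  simp [sphericalBessel, hx]

lemma sb_rec (n : ℕ) {x : ℝ} (hx : x ≠ 0) :
    sphericalBessel (n + 2) x =
      (2 * (n : ℝ) + 3) / x * sphericalBessel (n + 1) x - sphericalBessel n x := by
  simp [sphericalBessel, hx]

/-- denominator of series coefficient -/
def g (ℓ k : ℕ) : ℕ := 2 ^ k * k.factorial * (2 * ℓ + 2 * k + 1)‼

lemma g_pos (ℓ k : ℕ) : 0 < g ℓ k :=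
  Nat.mul_pos (Nat.mul_pos (Nat.two_pow_pos k) k.factorial_pos) (Nat.doubleFactorial_pos _)

noncomputable def coef (ℓ k : ℕ) : ℝ := (-1) ^ k / (g ℓ k : ℝ)

noncomputable def term (ℓ : ℕ) (x : ℝ) (k : ℕ) : ℝ := coef ℓ k * x ^ (2 * k + ℓ)

lemma gR_pos (ℓ k : ℕ) : (0:ℝ) < (g ℓ k : ℝ) := by exact_mod_cast g_pos ℓ k

lemma abs_coef_le (ℓ k : ℕ) : |coef ℓ k| ≤ 1 / (2 ^ k * k.factorial : ℝ) := by
  rw [coef, abs_div, abs_pow, abs_neg, abs_one, one_pow]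
  rw [abs_of_nonneg (le_of_lt (gR_pos ℓ k))]
  apply div_le_div_of_nonneg_left one_pos.le (by positivity)
  have h : (2 ^ k * k.factorial : ℕ) ≤ g ℓ k :=
    Nat.le_mul_of_pos_right _ (Nat.doubleFactorial_pos _)
  exact_mod_cast h

lemma abs_term_le (ℓ : ℕ) (x : ℝ) (k : ℕ) :
    |term ℓ x k| ≤ |x| ^ ℓ * ((x ^ 2 / 2) ^ k / k.factorial) := by
  rw [term, abs_mul, abs_pow]
  have h2 : |x| ^ (2 * k + ℓ) = |x| ^ ℓ * (x ^ 2) ^ k := by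
    rw [pow_add, mul_comm (|x| ^ (2*k)), pow_mul, sq_abs]
  rw [h2, ← mul_assoc, mul_comm |coef ℓ k|, mul_assoc]
  apply mul_le_mul_of_nonneg_left ?_ (by positivity)
  calc |coef ℓ k| * (x ^ 2) ^ k ≤ (1 / (2 ^ k * k.factorial : ℝ)) * (x ^ 2) ^ k := by
        exact mul_le_mul_of_nonneg_right (abs_coef_le ℓ k) (by positivity)
    _ = (x ^ 2 / 2) ^ k / k.factorial := by
        rw [div_pow]
        field_simp

lemma summable_abs_term (ℓ : ℕ) (x : ℝ) : Summable (fun k => |term ℓ x k|) := by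
  apply Summable.of_nonneg_of_le (fun k => abs_nonneg _) (abs_term_le ℓ x)
  exact ((Real.summable_pow_div_factorial (x ^ 2 / 2)).mul_left _)

lemma summable_term (ℓ : ℕ) (x : ℝ) : Summable (term ℓ x) :=
  (summable_abs_term ℓ x).of_abs


lemma dfac_mono (a m : ℕ) : (2*a+1)‼ ≤ (2*a+2*m+1)‼ := by
  induction m with
  | zero => simp
  | succ m ih =>
    have h : 2*a+2*(m+1)+1 = (2*a+2*m+1)+2 := by ring
    rw [h, Nat.doubleFactorial_add_two]
    calc (2*a+1)‼ ≤ (2*a+2*m+1)‼ := ih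
      _ ≤ (2*a+2*m+1+2) * (2*a+2*m+1)‼ := Nat.le_mul_of_pos_left _ (by omega)

lemma coef_zero (ℓ : ℕ) : coef ℓ 0 = 1 / ((2*ℓ+1)‼ : ℝ) := by
  simp [coef, g]

lemma coef_rec (ℓ k : ℕ) :
    (2*(ℓ:ℝ)+3) * coef (ℓ+1) (k+1) - coef ℓ (k+1) = coef (ℓ+2) k := by
  have h1 : 2*(ℓ+1)+2*(k+1)+1 = (2*ℓ+2*k+3)+2 := by ring
  have h2 : 2*ℓ+2*(k+1)+1 = 2*ℓ+2*k+3 := by ring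
  have h3 : 2*(ℓ+2)+2*k+1 = (2*ℓ+2*k+3)+2 := by ring
  rw [coef, coef, coef, g, g, g, h1, h2, h3, Nat.doubleFactorial_add_two,
    Nat.factorial_succ]
  have hD : ((2*ℓ+2*k+3)‼ : ℝ) ≠ 0 := by
    exact_mod_cast (Nat.doubleFactorial_pos _).ne'
  have hf : ((k.factorial : ℝ)) ≠ 0 := by exact_mod_cast k.factorial_pos.ne'
  have h2p : ((2:ℝ))^(k+1) ≠ 0 := by positivity
  have h2p' : ((2:ℝ))^k ≠ 0 := by positivity
  push_cast
  field_simp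
  ring

lemma tsum_term_rec (ℓ : ℕ) {x : ℝ} (hx : x ≠ 0) :
    (2*(ℓ:ℝ)+3)/x * (∑' k, term (ℓ+1) x k) - (∑' k, term ℓ x k)
      = ∑' k, term (ℓ+2) x k := by
  rw [← tsum_mul_left,
    ← Summable.tsum_sub ((summable_term (ℓ+1) x).mul_left _) (summable_term ℓ x),
    Summable.tsum_eq_zero_add (((summable_term (ℓ+1) x).mul_left _).sub (summable_term ℓ x))]
  have h0 : (2*(ℓ:ℝ)+3)/x * term (ℓ+1) x 0 - term ℓ x 0 = 0 := by
    rw [term, term, coef_zero, coef_zero]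
    have h4 : 2*(ℓ+1)+1 = (2*ℓ+1)+2 := by ring
    rw [h4, Nat.doubleFactorial_add_two]
    have hD : ((2*ℓ+1)‼ : ℝ) ≠ 0 := by
      exact_mod_cast (Nat.doubleFactorial_pos _).ne'
    have h5 : 2*0+(ℓ+1) = (2*0+ℓ)+1 := by ring
    rw [h5, pow_succ]
    push_cast
    field_simp
    ring
  rw [h0, zero_add]
  apply tsum_congr; intro k
  have h6 : 2*(k+1)+(ℓ+1) = (2*k+(ℓ+2))+1 := by ring
  have h7 : 2*(k+1)+ℓ = 2*k+(ℓ+2) := by ring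
  rw [term, term, term, h6, h7, pow_succ, ← coef_rec ℓ k]
  field_simp

lemma sb_eq_tsum : ∀ (ℓ : ℕ) {x : ℝ}, x ≠ 0 →
    sphericalBessel ℓ x = ∑' k, term ℓ x k := by
  have key : ∀ ℓ : ℕ, (∀ {x : ℝ}, x ≠ 0 → sphericalBessel ℓ x = ∑' k, term ℓ x k)
      ∧ (∀ {x : ℝ}, x ≠ 0 → sphericalBessel (ℓ+1) x = ∑' k, term (ℓ+1) x k) := by
    intro ℓ
    induction ℓ with
    | zero =>
      constructor
      · intro x hx
        rw [sb_zero hx]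
        have hs := (Real.hasSum_sin x).div_const x
        rw [← hs.tsum_eq]
        apply tsum_congr; intro k
        rw [term, coef]
        have hg : g 0 k = (2*k+1)! := by
          rw [g, Nat.factorial_eq_mul_doubleFactorial (2*k), Nat.doubleFactorial_two_mul]
          ring
        rw [hg]
        have h8 : 2*k+1 = (2*k+0)+1 := by ring
        rw [h8, pow_succ]
        have hfac : ((2*k+1)! : ℝ) ≠ 0 := by exact_mod_cast (2*k+1).factorial_pos.ne'
        field_simp
        ring
      · intro x hx
        rw [sb_one hx]
        have hs := ((Real.hasSum_sin x).div_const (x^2)).sub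
          ((Real.hasSum_cos x).div_const x)
        rw [← hs.tsum_eq, Summable.tsum_eq_zero_add hs.summable]
        have h0 : (-1:ℝ)^0 * x^(2*0+1) / ((2*0+1)! : ℕ) / x^2
            - (-1:ℝ)^0 * x^(2*0) / ((2*0)! : ℕ) / x = 0 := by
          norm_num
          field_simp
          ring
        rw [h0, zero_add]
        apply tsum_congr; intro k
        rw [term, coef]
        have hgN : g 1 k * (2*k+2) = (2*k+3)! := by
          have e3 : (2*k+3)! = (2*k+3)‼ * (2*k+2)‼ := by
            have h9 : 2*k+3 = (2*k+2)+1 := by ring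
            rw [h9, Nat.factorial_eq_mul_doubleFactorial]
          have h10 : (2*k+2)‼ = 2^(k+1) * (k+1)! := by
            have h11 : 2*k+2 = 2*(k+1) := by ring
            rw [h11, Nat.doubleFactorial_two_mul]
          rw [e3, h10, g]
          have h12 : 2*1+2*k+1 = 2*k+3 := by ring
          rw [h12, Nat.factorial_succ, pow_succ]
          ring
        have h14N : (2*k+2)! * (2*k+3) = (2*k+3)! := by
          have h := Nat.factorial_succ (2*k+2)
          have h15 : 2*k+2+1 = 2*k+3 := by omega
          rw [h15] at h
          rw [h]
          ring
        have hg : (g 1 k : ℝ) * (2*(k:ℝ)+2) = ((2*k+3)! : ℕ) := by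
          exact_mod_cast congrArg (Nat.cast (R := ℝ)) hgN
        have h14 : (((2*k+2)! : ℕ) : ℝ) * (2*(k:ℝ)+3) = ((2*k+3)! : ℕ) := by
          exact_mod_cast congrArg (Nat.cast (R := ℝ)) h14N
        have hF1 : (((2*k+3)! : ℕ) : ℝ) ≠ 0 := by
          exact_mod_cast (Nat.factorial_pos _).ne'
        have hF2 : (((2*k+2)! : ℕ) : ℝ) ≠ 0 := by
          exact_mod_cast (Nat.factorial_pos _).ne'
        have hgne : ((g 1 k : ℕ) : ℝ) ≠ 0 := (gR_pos 1 k).ne'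
        have key : (1:ℝ)/(((2*k+2)! : ℕ) : ℝ) - 1/(((2*k+3)! : ℕ) : ℝ)
            = 1/((g 1 k : ℕ) : ℝ) := by
          field_simp
          linear_combination (((2*k+2)! : ℕ) : ℝ) * hg - ((g 1 k : ℕ) : ℝ) * h14
        have e4 : 2*(k+1)+1 = 2*k+3 := by ring
        have e5 : 2*(k+1) = 2*k+2 := by ring
        rw [e4, e5]
        have e1 : (-1:ℝ)^(k+1) * x ^ (2*k+3) / (((2*k+3)! : ℕ) : ℝ) / x^2
            = (-1:ℝ)^(k+1) * x^(2*k+1) / (((2*k+3)! : ℕ) : ℝ) := by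
          rw [show 2*k+3 = (2*k+1)+2 from by ring, pow_add]
          field_simp
          ring
        have e2 : (-1:ℝ)^(k+1) * x ^ (2*k+2) / (((2*k+2)! : ℕ) : ℝ) / x
            = (-1:ℝ)^(k+1) * x^(2*k+1) / (((2*k+2)! : ℕ) : ℝ) := by
          rw [show 2*k+2 = (2*k+1)+1 from by ring, pow_succ]
          field_simp
          ring
        rw [e1, e2]
        linear_combination (-(1:ℝ))^k * x^(2*k+1) * key
    | succ n ih =>
      refine ⟨ih.2, ?_⟩
      intro x hx
      rw [sb_rec n hx, ih.1 hx, ih.2 hx, tsum_term_rec n hx]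
  intro ℓ; exact (key ℓ).1

noncomputable def cl (ℓ : ℕ) : ℝ := 1 / ((2*ℓ+1)‼ : ℝ)

lemma dfacR_pos (n : ℕ) : (0:ℝ) < (n‼ : ℝ) := by
  exact_mod_cast Nat.doubleFactorial_pos n

lemma cl_pos (ℓ : ℕ) : 0 < cl ℓ := by
  unfold cl; positivity

lemma cl_le_one (ℓ : ℕ) : cl ℓ ≤ 1 := by
  rw [cl]
  rw [div_le_one (dfacR_pos _)]
  exact_mod_cast Nat.doubleFactorial_pos _

lemma dfac_ge (ℓ : ℕ) : 2*ℓ+1 ≤ (2*ℓ+1)‼ := by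
  induction ℓ with
  | zero => simp
  | succ n ih =>
    have h : 2*(n+1)+1 = (2*n+1)+2 := by ring
    rw [h, Nat.doubleFactorial_add_two]
    have h2 : 1 ≤ (2*n+1)‼ := Nat.doubleFactorial_pos _
    nlinarith

lemma sb_near (ℓ : ℕ) {x : ℝ} (h0 : 0 < x) (h1 : x ≤ 1) :
    |sphericalBessel ℓ x - cl ℓ * x ^ ℓ| ≤ cl ℓ * x ^ (ℓ+2) := by
  rw [sb_eq_tsum ℓ h0.ne', Summable.tsum_eq_zero_add (summable_term ℓ x)]
  have ht0 : term ℓ x 0 = cl ℓ * x ^ ℓ := by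
    rw [term, coef_zero]
    norm_num [cl]
  rw [ht0, add_sub_cancel_left]
  have hsum : Summable fun k => term ℓ x (k+1) :=
    (summable_term ℓ x).comp_injective (add_left_injective 1)
  have bound : ∀ k : ℕ, |term ℓ x (k+1)| ≤ cl ℓ * x^(ℓ+2) * (1/2)^(k+1) := by
    intro k
    rw [term, abs_mul, abs_pow, abs_of_pos h0]
    have hc : |coef ℓ (k+1)| ≤ (1/2)^(k+1) * cl ℓ := by
      rw [coef, abs_div, abs_pow, abs_neg, abs_one, one_pow,
        abs_of_nonneg (gR_pos ℓ (k+1)).le]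
      have hgg : (2^(k+1) * (2*ℓ+1)‼ : ℕ) ≤ g ℓ (k+1) := by
        rw [g]
        calc 2^(k+1) * (2*ℓ+1)‼ ≤ 2^(k+1) * (2*ℓ+2*(k+1)+1)‼ :=
              Nat.mul_le_mul_left _ (dfac_mono ℓ (k+1))
          _ = 2 ^ (k+1) * 1 * (2*ℓ+2*(k+1)+1)‼ := by ring
          _ ≤ 2 ^ (k+1) * (k+1).factorial * (2*ℓ+2*(k+1)+1)‼ :=
              Nat.mul_le_mul_right _ (Nat.mul_le_mul_left _ (k+1).factorial_pos)
      have hgg' : ((2:ℝ)^(k+1) * ((2*ℓ+1)‼ : ℝ)) ≤ (g ℓ (k+1) : ℝ) := by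
        exact_mod_cast hgg
      rw [div_le_iff₀ (gR_pos ℓ (k+1)), cl]
      rw [div_pow, one_pow, div_mul_div_comm, one_mul, div_mul_eq_mul_div,
        le_div_iff₀ (by positivity)]
      calc (1:ℝ) * (2^(k+1) * ((2*ℓ+1)‼ : ℝ)) = 2^(k+1) * ((2*ℓ+1)‼ : ℝ) := by ring
        _ ≤ (g ℓ (k+1) : ℝ) := hgg'
        _ = 1 * (g ℓ (k+1) : ℝ) := by ring
    have hx : x ^ (2*(k+1)+ℓ) ≤ x^(ℓ+2) :=
      pow_le_pow_of_le_one h0.le h1 (by omega)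
    calc |coef ℓ (k+1)| * x ^ (2*(k+1)+ℓ) ≤ ((1/2)^(k+1) * cl ℓ) * x^(ℓ+2) :=
          mul_le_mul hc hx (by positivity)
            (mul_nonneg (by positivity) (cl_pos ℓ).le)
      _ = cl ℓ * x^(ℓ+2) * (1/2)^(k+1) := by ring
  calc |∑' k, term ℓ x (k+1)| ≤ ∑' k, |term ℓ x (k+1)| := by
        have := norm_tsum_le_tsum_norm (f := fun k => term ℓ x (k+1))
          (by simpa [Real.norm_eq_abs] using hsum.abs)
        simpa [Real.norm_eq_abs] using this
    _ ≤ ∑' k : ℕ, cl ℓ * x^(ℓ+2) * (1/2)^(k+1) := by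
        apply Summable.tsum_le_tsum bound hsum.abs
        exact (summable_geometric_two.mul_left _).comp_injective (add_left_injective 1)
    _ = cl ℓ * x^(ℓ+2) := by
        have : ∀ k:ℕ, cl ℓ * x^(ℓ+2) * (1/2:ℝ)^(k+1) = (cl ℓ * x^(ℓ+2)) / 2 / 2^k := by
          intro k; rw [pow_succ, one_div, inv_pow]; ring
        rw [tsum_congr this, tsum_geometric_two' (cl ℓ * x^(ℓ+2))]

lemma sb_small_le (ℓ : ℕ) {x : ℝ} (h0 : 0 < x) (h1 : x ≤ 1) :
    |sphericalBessel ℓ x| ≤ 2 * cl ℓ * x ^ ℓ := by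
  have h := sb_near ℓ h0 h1
  have h2 : x ^ (ℓ+2) ≤ x ^ ℓ := pow_le_pow_of_le_one h0.le h1 (by omega)
  have h3 : |sphericalBessel ℓ x| ≤ |sphericalBessel ℓ x - cl ℓ * x ^ ℓ| + |cl ℓ * x ^ ℓ| := by
    calc |sphericalBessel ℓ x| = |(sphericalBessel ℓ x - cl ℓ * x ^ ℓ) + cl ℓ * x ^ ℓ| := by
          ring_nf
      _ ≤ |sphericalBessel ℓ x - cl ℓ * x ^ ℓ| + |cl ℓ * x ^ ℓ| := abs_add_le _ _
  have h4 : |cl ℓ * x ^ ℓ| = cl ℓ * x ^ ℓ :=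
    abs_of_pos (mul_pos (cl_pos ℓ) (pow_pos h0 ℓ))
  nlinarith [mul_le_mul_of_nonneg_left h2 (cl_pos ℓ).le]

lemma sb_pos (ℓ : ℕ) {x : ℝ} (h0 : 0 < x) (h1 : x < 1) : 0 < sphericalBessel ℓ x := by
  have h := sb_near ℓ h0 h1.le
  have h2 := abs_le.mp h
  have h3 : cl ℓ * x ^ (ℓ+2) < cl ℓ * x ^ ℓ := by
    apply mul_lt_mul_of_pos_left ?_ (cl_pos ℓ)
    have e : x ^ (ℓ+2) = x^ℓ * x^2 := by ring
    rw [e]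
    have hx2 : x^2 < 1 := by nlinarith
    calc x^ℓ * x^2 < x^ℓ * 1 := mul_lt_mul_of_pos_left hx2 (pow_pos h0 ℓ)
      _ = x^ℓ := mul_one _
  linarith [h2.1]

noncomputable def u (ℓ : ℕ) (x : ℝ) : ℝ := x * sphericalBessel ℓ x

noncomputable def ud (ℓ : ℕ) (x : ℝ) : ℝ := ((ℓ:ℝ)+1)/x * u ℓ x - u (ℓ+1) x

lemma u_rec (n : ℕ) {x : ℝ} (hx : x ≠ 0) :
    u (n+2) x = (2*(n:ℝ)+3)/x * u (n+1) x - u n x := by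
  unfold u; rw [sb_rec n hx]; field_simp

lemma u_zero {x : ℝ} (hx : x ≠ 0) : u 0 x = Real.sin x := by
  unfold u; rw [sb_zero hx]; field_simp

lemma u_one {x : ℝ} (hx : x ≠ 0) : u 1 x = Real.sin x / x - Real.cos x := by
  unfold u; rw [sb_one hx]; field_simp

lemma ev_ne (x : ℝ) (hx : 0 < x) : ∀ᶠ y in nhds x, y ≠ 0 :=
  eventually_ne_nhds hx.ne'

lemma hasDerivAt_u_pair : ∀ (ℓ : ℕ),
    (∀ {x : ℝ}, 0 < x → HasDerivAt (u ℓ) (((ℓ:ℝ)+1)/x * u ℓ x - u (ℓ+1) x) x)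
    ∧ (∀ {x : ℝ}, 0 < x → HasDerivAt (u (ℓ+1)) (u ℓ x - ((ℓ:ℝ)+1)/x * u (ℓ+1) x) x) := by
  intro ℓ
  induction ℓ with
  | zero =>
    constructor
    · intro x hx
      have h1 : HasDerivAt (u 0) (Real.cos x) x := by
        apply (Real.hasDerivAt_sin x).congr_of_eventuallyEq
        filter_upwards [ev_ne x hx] with y hy
        exact u_zero hy
      convert h1 using 1
      rw [u_zero hx.ne', u_one hx.ne']
      push_cast
      field_simp
      ring
    · intro x hx
      have h1 : HasDerivAt (fun y => Real.sin y / y - Real.cos y)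
          ((Real.cos x * x - Real.sin x * 1) / x^2 + Real.sin x) x := by
        have h0 := ((Real.hasDerivAt_sin x).div (hasDerivAt_id x) hx.ne').sub
          (Real.hasDerivAt_cos x)
        simp only [id] at h0
        refine h0.congr_deriv ?_
        ring
      have h2 : HasDerivAt (u 1) ((Real.cos x * x - Real.sin x * 1) / x^2 + Real.sin x) x := by
        apply h1.congr_of_eventuallyEq
        filter_upwards [ev_ne x hx] with y hy
        exact u_one hy
      convert h2 using 1
      rw [u_zero hx.ne', u_one hx.ne']
      push_cast
      field_simp
      ring
  | succ ℓ ih =>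
    obtain ⟨hP, hQ⟩ := ih
    constructor
    · intro x hx
      have h1 := hQ hx
      convert h1 using 1
      rw [u_rec ℓ hx.ne']
      push_cast
      field_simp
      ring
    · intro x hx
      have hdiv : HasDerivAt (fun y : ℝ => (2*(ℓ:ℝ)+3)/y) (-(2*(ℓ:ℝ)+3)/x^2) x := by
        have h0 := (hasDerivAt_inv hx.ne').const_mul (2*(ℓ:ℝ)+3)
        simp only [div_eq_mul_inv]
        refine h0.congr_deriv ?_
        ring
      have h1 : HasDerivAt (fun y => (2*(ℓ:ℝ)+3)/y * u (ℓ+1) y - u ℓ y)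
          ((-(2*(ℓ:ℝ)+3)/x^2) * u (ℓ+1) x
            + (2*(ℓ:ℝ)+3)/x * (u ℓ x - ((ℓ:ℝ)+1)/x * u (ℓ+1) x)
            - (((ℓ:ℝ)+1)/x * u ℓ x - u (ℓ+1) x)) x :=
        (hdiv.mul (hQ hx)).sub (hP hx)
      have h2 : HasDerivAt (u (ℓ+2))
          ((-(2*(ℓ:ℝ)+3)/x^2) * u (ℓ+1) x
            + (2*(ℓ:ℝ)+3)/x * (u ℓ x - ((ℓ:ℝ)+1)/x * u (ℓ+1) x)
            - (((ℓ:ℝ)+1)/x * u ℓ x - u (ℓ+1) x)) x := by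
        apply h1.congr_of_eventuallyEq
        filter_upwards [ev_ne x hx] with y hy
        exact u_rec ℓ hy
      convert h2 using 1
      rw [u_rec ℓ hx.ne']
      push_cast
      field_simp
      ring

lemma hasDerivAt_u (ℓ : ℕ) {x : ℝ} (hx : 0 < x) : HasDerivAt (u ℓ) (ud ℓ x) x :=
  (hasDerivAt_u_pair ℓ).1 hx

lemma hasDerivAt_u' (ℓ : ℕ) {x : ℝ} (hx : 0 < x) :
    HasDerivAt (u (ℓ+1)) (u ℓ x - ((ℓ:ℝ)+1)/x * u (ℓ+1) x) x :=
  (hasDerivAt_u_pair ℓ).2 hx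

lemma hasDerivAt_ud (ℓ : ℕ) {x : ℝ} (hx : 0 < x) :
    HasDerivAt (ud ℓ) (((ℓ:ℝ)*((ℓ:ℝ)+1)/x^2 - 1) * u ℓ x) x := by
  have hdiv : HasDerivAt (fun y : ℝ => ((ℓ:ℝ)+1)/y) (-((ℓ:ℝ)+1)/x^2) x := by
    have h0 := (hasDerivAt_inv hx.ne').const_mul ((ℓ:ℝ)+1)
    simp only [div_eq_mul_inv]
    refine h0.congr_deriv ?_
    ring
  have h1 : HasDerivAt (ud ℓ)
      ((-((ℓ:ℝ)+1)/x^2) * u ℓ x + ((ℓ:ℝ)+1)/x * (((ℓ:ℝ)+1)/x * u ℓ x - u (ℓ+1) x)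
        - (u ℓ x - ((ℓ:ℝ)+1)/x * u (ℓ+1) x)) x :=
    (hdiv.mul (hasDerivAt_u ℓ hx)).sub (hasDerivAt_u' ℓ hx)
  convert h1 using 1
  field_simp
  ring

open Filter Real in
noncomputable def Fe (ℓ : ℕ) (x : ℝ) : ℝ :=
  (ud ℓ x)^2 + (1 - (ℓ:ℝ)*((ℓ:ℝ)+1)/x^2) * (u ℓ x)^2

lemma hasDerivAt_Fe (ℓ : ℕ) {x : ℝ} (hx : 0 < x) :
    HasDerivAt (Fe ℓ) (2*(ℓ:ℝ)*((ℓ:ℝ)+1) * (u ℓ x)^2 / x^3) x := by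
  have h1 := hasDerivAt_ud ℓ hx
  have h2 := hasDerivAt_u ℓ hx
  have hx2 : (x:ℝ)^2 ≠ 0 := by positivity
  have hVinv : HasDerivAt (fun y : ℝ => (y^2)⁻¹) (-(2*x)/(x^2)^2) x :=
    (hasDerivAt_pow 2 x).inv hx2 |>.congr_deriv (by ring_nf)
  have hV : HasDerivAt (fun y : ℝ => 1 - (ℓ:ℝ)*((ℓ:ℝ)+1)/y^2)
      (2*(ℓ:ℝ)*((ℓ:ℝ)+1)/x^3) x := by
    have h3 := (hVinv.const_mul ((ℓ:ℝ)*((ℓ:ℝ)+1))).const_sub 1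
    simp only [div_eq_mul_inv]
    refine h3.congr_deriv ?_
    field_simp
  have h4 : HasDerivAt (Fe ℓ)
      (2 * ud ℓ x ^ 1 * (((ℓ:ℝ)*((ℓ:ℝ)+1)/x^2 - 1) * u ℓ x)
        + ((2*(ℓ:ℝ)*((ℓ:ℝ)+1)/x^3) * (u ℓ x)^2
            + (1 - (ℓ:ℝ)*((ℓ:ℝ)+1)/x^2) * (2 * u ℓ x ^ 1 * ud ℓ x))) x :=
    (h1.pow 2).add (hV.mul (h2.pow 2))
  convert h4 using 1
  field_simp
  ring

lemma Fe_mono (ℓ : ℕ) : MonotoneOn (Fe ℓ) (Set.Ioi 0) := by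
  apply monotoneOn_of_deriv_nonneg (convex_Ioi 0)
  · intro x hx
    exact (hasDerivAt_Fe ℓ hx).continuousAt.continuousWithinAt
  · intro x hx
    rw [interior_Ioi] at hx
    exact (hasDerivAt_Fe ℓ hx).differentiableAt.differentiableWithinAt
  · intro x hx
    rw [interior_Ioi] at hx
    rw [(hasDerivAt_Fe ℓ hx).deriv]
    have hx' : (0:ℝ) < x := hx
    positivity

open Filter Real

lemma tendsto_u_sub_trig : ∀ ℓ : ℕ,
    Tendsto (fun x => u ℓ x - Real.sin (x - (ℓ:ℝ)*π/2)) atTop (nhds 0) := by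
  set P : ℕ → Prop :=
    fun m => Tendsto (fun x => u m x - Real.sin (x - (m:ℝ)*π/2)) atTop (nhds 0) with hP
  have key : ∀ ℓ : ℕ, P ℓ ∧ P (ℓ+1) := by
    intro ℓ
    induction ℓ with
    | zero =>
      constructor
      · rw [hP]
        apply Tendsto.congr' ?_ tendsto_const_nhds
        filter_upwards [eventually_gt_atTop 0] with x hx
        rw [u_zero hx.ne']
        norm_num
      · rw [hP]
        have hsin : Tendsto (fun x : ℝ => Real.sin x / x) atTop (nhds 0) := by
          apply squeeze_zero_norm' ?_ tendsto_inv_atTop_zero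
          filter_upwards [eventually_ge_atTop 1] with x hx
          have hx0 : (0:ℝ) < x := by linarith
          rw [Real.norm_eq_abs, abs_div, abs_of_pos hx0, ← one_div]
          gcongr
          exact Real.abs_sin_le_one x
        apply Tendsto.congr' ?_ hsin
        filter_upwards [eventually_gt_atTop 0] with x hx
        rw [u_one hx.ne']
        push_cast
        rw [show x - 1*π/2 = x - π/2 by ring, Real.sin_sub_pi_div_two]
        ring
    | succ ℓ ih =>
      obtain ⟨h1, h2⟩ := ih
      refine ⟨h2, ?_⟩
      rw [hP] at h1 h2 ⊢
      have hb : ∀ᶠ x in atTop, |u (ℓ+1) x| ≤ 2 := by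
        have h3 := Metric.tendsto_nhds.mp h2 1 one_pos
        filter_upwards [h3] with x hx
        rw [Real.dist_eq, sub_zero] at hx
        have hs1 := Real.neg_one_le_sin (x - ((ℓ+1:ℕ):ℝ)*π/2)
        have hs2 := Real.sin_le_one (x - ((ℓ+1:ℕ):ℝ)*π/2)
        rw [abs_lt] at hx
        rw [abs_le]
        constructor <;> nlinarith [hx.1, hx.2]
      have hz : Tendsto (fun x => (2*(ℓ:ℝ)+3) * u (ℓ+1) x / x) atTop (nhds 0) := by
        have hc : Tendsto (fun x : ℝ => (2*(2*(ℓ:ℝ)+3)) * x⁻¹) atTop (nhds 0) := by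
          have := tendsto_inv_atTop_zero (𝕜 := ℝ) |>.const_mul (2*(2*(ℓ:ℝ)+3))
          simpa using this
        apply squeeze_zero_norm' ?_ hc
        filter_upwards [eventually_ge_atTop 1, hb] with x hx hbx
        have hx0 : (0:ℝ) < x := by linarith
        rw [Real.norm_eq_abs, abs_div, abs_of_pos hx0, abs_mul,
          abs_of_nonneg (by positivity : (0:ℝ) ≤ 2*(ℓ:ℝ)+3),
          mul_comm (2*(2*(ℓ:ℝ)+3)) x⁻¹, ← div_eq_inv_mul]
        have hnum : (2*(ℓ:ℝ)+3) * |u (ℓ+1) x| ≤ 2*(2*(ℓ:ℝ)+3) := by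
          nlinarith [abs_nonneg (u (ℓ+1) x)]
        exact (div_le_div_iff_of_pos_right hx0).mpr hnum
      have hfin := hz.sub h1
      rw [sub_zero] at hfin
      apply Tendsto.congr' ?_ hfin
      filter_upwards [eventually_gt_atTop 0] with x hx
      rw [u_rec ℓ hx.ne']
      have hcast : ((ℓ+1+1:ℕ):ℝ)*π/2 = (ℓ:ℝ)*π/2 + π := by push_cast; ring
      rw [hcast, show x - ((ℓ:ℝ)*π/2 + π) = (x - (ℓ:ℝ)*π/2) - π by ring,
        Real.sin_sub_pi]
      field_simp
      ring
  intro ℓ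
  exact (key ℓ).1

lemma tendsto_of_abs_le_div {f : ℝ → ℝ} (c : ℝ)
    (h : ∀ᶠ x in atTop, |f x| ≤ c / x) : Tendsto f atTop (nhds 0) := by
  have hg : Tendsto (fun x : ℝ => c / x) atTop (nhds 0) := by
    have := tendsto_inv_atTop_zero (𝕜 := ℝ) |>.const_mul c
    rw [mul_zero] at this
    apply this.congr
    intro x
    rw [div_eq_mul_inv]
  apply squeeze_zero_norm' ?_ hg
  filter_upwards [h] with x hx
  rwa [Real.norm_eq_abs]

lemma u_abs_eventually (ℓ : ℕ) : ∀ᶠ x in atTop, |u ℓ x| ≤ 2 := by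
  have h3 := Metric.tendsto_nhds.mp (tendsto_u_sub_trig ℓ) 1 one_pos
  filter_upwards [h3] with x hx
  rw [Real.dist_eq, sub_zero] at hx
  have hs1 := Real.neg_one_le_sin (x - (ℓ:ℝ)*π/2)
  have hs2 := Real.sin_le_one (x - (ℓ:ℝ)*π/2)
  rw [abs_lt] at hx
  rw [abs_le]
  constructor <;> nlinarith [hx.1, hx.2]

lemma trig_pyth (ℓ : ℕ) (x : ℝ) :
    Real.sin (x - (ℓ:ℝ)*π/2)^2 + Real.sin (x - ((ℓ+1:ℕ):ℝ)*π/2)^2 = 1 := by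
  have h : x - ((ℓ+1:ℕ):ℝ)*π/2 = (x - (ℓ:ℝ)*π/2) - π/2 := by push_cast; ring
  rw [h, Real.sin_sub_pi_div_two]
  rw [neg_sq]
  exact Real.sin_sq_add_cos_sq _

lemma tendsto_Fe (ℓ : ℕ) : Tendsto (Fe ℓ) atTop (nhds 1) := by
  have hT1 := tendsto_u_sub_trig ℓ
  have hT2 := tendsto_u_sub_trig (ℓ+1)
  have hA : Tendsto (fun x => (u ℓ x)^2 + (u (ℓ+1) x)^2) atTop (nhds 1) := by
    have hgt : Tendsto (fun x => |u ℓ x - Real.sin (x - (ℓ:ℝ)*π/2)|^2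
          + 2*|u ℓ x - Real.sin (x - (ℓ:ℝ)*π/2)|
          + (|u (ℓ+1) x - Real.sin (x - ((ℓ+1:ℕ):ℝ)*π/2)|^2
          + 2*|u (ℓ+1) x - Real.sin (x - ((ℓ+1:ℕ):ℝ)*π/2)|)) atTop (nhds 0) := by
      have hg := ((hT1.abs.pow 2).add (hT1.abs.const_mul 2)).add
        ((hT2.abs.pow 2).add (hT2.abs.const_mul 2))
      simpa using hg
    have h0 : Tendsto (fun x => (u ℓ x)^2 + (u (ℓ+1) x)^2 - 1) atTop (nhds 0) := by
      apply squeeze_zero_norm ?_ hgt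
      intro x
      set a := u ℓ x - Real.sin (x - (ℓ:ℝ)*π/2) with ha
      set b := u (ℓ+1) x - Real.sin (x - ((ℓ+1:ℕ):ℝ)*π/2) with hb
      set s1 := Real.sin (x - (ℓ:ℝ)*π/2) with hs1
      set s2 := Real.sin (x - ((ℓ+1:ℕ):ℝ)*π/2) with hs2
      have hpy : s1^2 + s2^2 = 1 := trig_pyth ℓ x
      have hu1 : u ℓ x = a + s1 := by rw [ha]; ring
      have hu2 : u (ℓ+1) x = b + s2 := by rw [hb]; ring
      have hb1 : |a * s1| ≤ |a| :=
        (abs_mul a s1) ▸ mul_le_of_le_one_right (abs_nonneg a) (Real.abs_sin_le_one _)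
      have hb2 : |b * s2| ≤ |b| :=
        (abs_mul b s2) ▸ mul_le_of_le_one_right (abs_nonneg b) (Real.abs_sin_le_one _)
      rw [Real.norm_eq_abs, hu1, hu2]
      have hexp : (a + s1)^2 + (b + s2)^2 - 1 = a^2 + 2*(a*s1) + (b^2 + 2*(b*s2)) := by
        nlinarith [hpy]
      rw [hexp, abs_le]
      have e1 := le_abs_self (a*s1)
      have e2 := neg_abs_le (a*s1)
      have e3 := le_abs_self (b*s2)
      have e4 := neg_abs_le (b*s2)
      constructor <;> nlinarith [sq_abs a, sq_abs b, abs_nonneg a, abs_nonneg b]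
    have := h0.add (tendsto_const_nhds (x := (1:ℝ)) (f := atTop))
    simpa using this
  have hB : Tendsto (fun x => ((ℓ:ℝ)+1)*(u ℓ x)^2/x^2) atTop (nhds 0) := by
    apply tendsto_of_abs_le_div (4*((ℓ:ℝ)+1))
    filter_upwards [eventually_ge_atTop 1, u_abs_eventually ℓ] with x hx hux
    have hx0 : (0:ℝ) < x := by linarith
    rw [abs_div, abs_of_pos (by positivity : (0:ℝ) < x^2), abs_mul,
      abs_of_nonneg (by positivity : (0:ℝ) ≤ (ℓ:ℝ)+1), abs_pow]
    rw [div_le_div_iff₀ (by positivity) hx0]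
    have h1 : |u ℓ x|^2 ≤ 4 := by nlinarith [abs_nonneg (u ℓ x)]
    have hxx : x ≤ x^2 := by nlinarith
    nlinarith [mul_le_mul_of_nonneg_left h1 (by positivity : (0:ℝ) ≤ ((ℓ:ℝ)+1)*x),
      mul_le_mul_of_nonneg_left hxx (by positivity : (0:ℝ) ≤ 4*((ℓ:ℝ)+1))]
  have hC : Tendsto (fun x => 2*((ℓ:ℝ)+1)*(u ℓ x)*(u (ℓ+1) x)/x) atTop (nhds 0) := by
    apply tendsto_of_abs_le_div (8*((ℓ:ℝ)+1))
    filter_upwards [eventually_ge_atTop 1, u_abs_eventually ℓ,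
      u_abs_eventually (ℓ+1)] with x hx hux hux'
    have hx0 : (0:ℝ) < x := by linarith
    rw [abs_div, abs_of_pos hx0]
    apply (div_le_div_iff_of_pos_right hx0).mpr
    rw [abs_mul, abs_mul, abs_of_nonneg (by positivity : (0:ℝ) ≤ 2*((ℓ:ℝ)+1))]
    nlinarith [abs_nonneg (u ℓ x), abs_nonneg (u (ℓ+1) x),
      mul_le_mul hux hux' (abs_nonneg _) (by norm_num : (0:ℝ) ≤ 2)]
  have hFe := hA.add (hB.sub hC)
  norm_num at hFe
  apply Tendsto.congr' ?_ hFe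
  filter_upwards [eventually_gt_atTop 0] with x hx
  rw [Fe, ud]
  field_simp
  ring

lemma Fe_le_one (ℓ : ℕ) {x : ℝ} (hx : 0 < x) : Fe ℓ x ≤ 1 := by
  apply ge_of_tendsto (tendsto_Fe ℓ)
  filter_upwards [eventually_ge_atTop (max x 1)] with t ht
  have hx' : x ∈ Set.Ioi (0:ℝ) := hx
  have ht' : t ∈ Set.Ioi (0:ℝ) := by
    simp only [Set.mem_Ioi]
    have := le_max_right x 1
    linarith [le_trans this ht]
  exact Fe_mono ℓ hx' ht' (le_trans (le_max_left x 1) ht)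

noncomputable def xt (ℓ : ℕ) : ℝ := Real.sqrt ((ℓ:ℝ)*((ℓ:ℝ)+1))

lemma sq_le_of_le_xt {ℓ : ℕ} {x : ℝ} (hx : 0 ≤ x) (h : x ≤ xt ℓ) :
    x^2 ≤ (ℓ:ℝ)*((ℓ:ℝ)+1) := by
  have h2 := Real.sq_sqrt (show (0:ℝ) ≤ (ℓ:ℝ)*((ℓ:ℝ)+1) by positivity)
  rw [xt] at h
  nlinarith [h2, Real.sqrt_nonneg ((ℓ:ℝ)*((ℓ:ℝ)+1))]

lemma u_small (ℓ : ℕ) {s : ℝ} (h0 : 0 < s) (h1 : s ≤ 1) : |u ℓ s| ≤ 2*s := by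
  have hsb := sb_small_le ℓ h0 h1
  rw [u, abs_mul, abs_of_pos h0]
  have h2 : |sphericalBessel ℓ s| ≤ 2 := by
    have hcl := cl_le_one ℓ
    have hpow : s^ℓ ≤ 1 := pow_le_one₀ h0.le h1
    nlinarith [cl_pos ℓ, pow_pos h0 ℓ]
  nlinarith [abs_nonneg (sphericalBessel ℓ s)]

lemma u_pos_small (ℓ : ℕ) {s : ℝ} (h0 : 0 < s) (h1 : s < 1) : 0 < u ℓ s :=
  mul_pos h0 (sb_pos ℓ h0 h1)

lemma ud_monoOn (ℓ : ℕ) {T : ℝ} (hT : T ≤ xt ℓ)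
    (hu : ∀ s, 0 < s → s < T → 0 ≤ u ℓ s) : MonotoneOn (ud ℓ) (Set.Ioc 0 T) := by
  apply monotoneOn_of_deriv_nonneg (convex_Ioc 0 T)
  · intro x hx
    exact (hasDerivAt_ud ℓ hx.1).continuousAt.continuousWithinAt
  · rw [interior_Ioc]
    intro x hx
    exact (hasDerivAt_ud ℓ hx.1).differentiableAt.differentiableWithinAt
  · rw [interior_Ioc]
    intro x hx
    rw [(hasDerivAt_ud ℓ hx.1).deriv]
    have h1 : x^2 ≤ (ℓ:ℝ)*((ℓ:ℝ)+1) := sq_le_of_le_xt hx.1.le (le_trans hx.2.le hT)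
    have h2 : (0:ℝ) < x^2 := pow_pos hx.1 2
    have h3 : 0 ≤ (ℓ:ℝ)*((ℓ:ℝ)+1)/x^2 - 1 := by
      rw [le_sub_iff_add_le, zero_add, le_div_iff₀ h2, one_mul]
      exact h1
    exact mul_nonneg h3 (hu x hx.1 hx.2)

lemma ud_nonneg_aux (ℓ : ℕ) {T : ℝ} (hT : T ≤ xt ℓ)
    (hu : ∀ s, 0 < s → s < T → 0 < u ℓ s) :
    ∀ {x : ℝ}, 0 < x → x < T → 0 ≤ ud ℓ x := by
  intro t0 ht0 htT
  by_contra hneg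
  push_neg at hneg
  have hmono := ud_monoOn ℓ hT (fun s hs hsT => (hu s hs hsT).le)
  have hanti : AntitoneOn (u ℓ) (Set.Ioc 0 t0) := by
    apply antitoneOn_of_deriv_nonpos (convex_Ioc 0 t0)
    · intro x hx
      exact (hasDerivAt_u ℓ hx.1).continuousAt.continuousWithinAt
    · rw [interior_Ioc]
      intro x hx
      exact (hasDerivAt_u ℓ hx.1).differentiableAt.differentiableWithinAt
    · rw [interior_Ioc]
      intro x hx
      rw [(hasDerivAt_u ℓ hx.1).deriv]
      have hx2 : ud ℓ x ≤ ud ℓ t0 :=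
        hmono ⟨hx.1, le_trans hx.2.le htT.le⟩ ⟨ht0, htT.le⟩ hx.2.le
      linarith
  have hut0 := hu t0 ht0 htT
  set s := min t0 (min 1 (u ℓ t0 / 4)) with hs
  have hs0 : 0 < s := by
    apply lt_min ht0
    apply lt_min one_pos
    linarith
  have hst0 : s ≤ t0 := min_le_left _ _
  have hs1 : s ≤ 1 := le_trans (min_le_right _ _) (min_le_left _ _)
  have hs4 : s ≤ u ℓ t0 / 4 := le_trans (min_le_right _ _) (min_le_right _ _)
  have hle : u ℓ t0 ≤ u ℓ s := hanti ⟨hs0, hst0⟩ ⟨ht0, le_refl _⟩ hst0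
  have hsmall := u_small ℓ hs0 hs1
  have : u ℓ s ≤ 2*s := le_trans (le_abs_self _) hsmall
  linarith

lemma u_pos (ℓ : ℕ) : ∀ {x : ℝ}, 0 < x → x ≤ xt ℓ → 0 < u ℓ x := by
  intro x hx hxt
  by_contra hle
  push_neg at hle
  have hz1 : (1:ℝ) ≤ x := by
    by_contra h
    push_neg at h
    exact absurd (u_pos_small ℓ hx h) (by linarith)
  set S := Set.Icc (1/2 : ℝ) x ∩ (u ℓ) ⁻¹' (Set.Iic 0) with hSdef
  have hcont : ContinuousOn (u ℓ) (Set.Icc (1/2:ℝ) x) := by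
    intro t ht
    exact (hasDerivAt_u ℓ (by linarith [ht.1] : (0:ℝ) < t)).continuousAt.continuousWithinAt
  have hScl : IsClosed S := by
    exact ContinuousOn.preimage_isClosed_of_isClosed hcont isClosed_Icc isClosed_Iic
  have hSne : S.Nonempty := ⟨x, ⟨⟨by linarith, le_refl x⟩, hle⟩⟩
  have hScpt : IsCompact S :=
    isCompact_Icc.of_isClosed_subset hScl (fun t ht => ht.1)
  have hz0S : sInf S ∈ S := hScpt.sInf_mem hSne
  set z0 := sInf S with hz0
  have hz0half : (1/2:ℝ) ≤ z0 := hz0S.1.1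
  have hupos : ∀ s, 0 < s → s < z0 → 0 < u ℓ s := by
    intro s hs hsz
    rcases lt_or_ge s 1 with h|h
    · exact u_pos_small ℓ hs h
    · by_contra hnp
      push_neg at hnp
      have hsS : s ∈ S := ⟨⟨by linarith, by linarith [hz0S.1.2]⟩, hnp⟩
      have := csInf_le hScpt.bddBelow hsS
      linarith
  have hz0xt : z0 ≤ xt ℓ := le_trans hz0S.1.2 hxt
  have hudnn : ∀ {s : ℝ}, 0 < s → s < z0 → 0 ≤ ud ℓ s :=
    fun {s} hs hsz => ud_nonneg_aux ℓ hz0xt hupos hs hsz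
  have hmono : MonotoneOn (u ℓ) (Set.Ioc 0 z0) := by
    apply monotoneOn_of_deriv_nonneg (convex_Ioc 0 z0)
    · intro t ht
      exact (hasDerivAt_u ℓ ht.1).continuousAt.continuousWithinAt
    · rw [interior_Ioc]
      intro t ht
      exact (hasDerivAt_u ℓ ht.1).differentiableAt.differentiableWithinAt
    · rw [interior_Ioc]
      intro t ht
      rw [(hasDerivAt_u ℓ ht.1).deriv]
      exact hudnn ht.1 ht.2
  have h12 : u ℓ (1/2) ≤ u ℓ z0 :=
    hmono ⟨by norm_num, by linarith⟩ ⟨by linarith, le_refl _⟩ hz0half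
  have hpos12 : 0 < u ℓ (1/2) := u_pos_small ℓ (by norm_num) (by norm_num)
  have : u ℓ z0 ≤ 0 := hz0S.2
  linarith

lemma ud_abs_le_one (ℓ : ℕ) {x : ℝ} (hx : 0 < x) : |ud ℓ x| ≤ 1 := by
  rcases le_or_gt (xt ℓ) x with hge|hlt
  · have hFe := Fe_le_one ℓ hx
    have hsq : (ud ℓ x)^2 ≤ 1 := by
      have h1 : (ℓ:ℝ)*((ℓ:ℝ)+1) ≤ x^2 := by
        have h2 := Real.sq_sqrt (show (0:ℝ) ≤ (ℓ:ℝ)*((ℓ:ℝ)+1) by positivity)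
        have h3 : xt ℓ ^ 2 ≤ x^2 := by
          apply pow_le_pow_left₀ (Real.sqrt_nonneg _) hge
        rw [xt] at h3
        linarith
      have h4 : 0 ≤ 1 - (ℓ:ℝ)*((ℓ:ℝ)+1)/x^2 := by
        rw [sub_nonneg, div_le_one (by positivity)]
        exact h1
      have h5 : 0 ≤ (1 - (ℓ:ℝ)*((ℓ:ℝ)+1)/x^2) * (u ℓ x)^2 :=
        mul_nonneg h4 (sq_nonneg _)
      rw [Fe] at hFe
      linarith
    exact (sq_le_one_iff_abs_le_one _).mp hsq
  · have hnn : 0 ≤ ud ℓ x :=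
      ud_nonneg_aux ℓ (le_refl (xt ℓ)) (fun s hs hsT => u_pos ℓ hs hsT.le) hx hlt
    have hle1 : ud ℓ x ≤ 1 := by
      have hxt0 : 0 < xt ℓ := lt_trans hx hlt
      have hmono := ud_monoOn ℓ (le_refl (xt ℓ))
        (fun s hs hsT => (u_pos ℓ hs hsT.le).le)
      have h6 : ud ℓ x ≤ ud ℓ (xt ℓ) :=
        hmono ⟨hx, hlt.le⟩ ⟨hxt0, le_refl _⟩ hlt.le
      have hFext := Fe_le_one ℓ hxt0
      have hcoef : 1 - (ℓ:ℝ)*((ℓ:ℝ)+1)/(xt ℓ)^2 = 0 := by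
        rw [xt, Real.sq_sqrt (by positivity : (0:ℝ) ≤ (ℓ:ℝ)*((ℓ:ℝ)+1))]
        rw [div_self ?_, sub_self]
        have : (0:ℝ) < (ℓ:ℝ)*((ℓ:ℝ)+1) := by
          rw [xt, Real.sqrt_pos] at hxt0
          exact hxt0
        exact this.ne'
      rw [Fe, hcoef, zero_mul, add_zero] at hFext
      have := (sq_le_one_iff_abs_le_one _).mp hFext
      have := le_abs_self (ud ℓ (xt ℓ))
      linarith [abs_le.mp ((sq_le_one_iff_abs_le_one _).mp hFext)]
    rw [abs_le]
    exact ⟨by linarith, hle1⟩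

lemma u_abs_le_self (ℓ : ℕ) {x : ℝ} (hx : 0 < x) : |u ℓ x| ≤ x := by
  apply le_of_forall_pos_le_add
  intro ε hε
  set s := min x (min 1 ε) with hs
  have hs0 : 0 < s := lt_min hx (lt_min one_pos hε)
  have hsx : s ≤ x := min_le_left _ _
  have hs1 : s ≤ 1 := le_trans (min_le_right _ _) (min_le_left _ _)
  have hsε : s ≤ ε := le_trans (min_le_right _ _) (min_le_right _ _)
  have hmvt := norm_image_sub_le_of_norm_deriv_le_segment'
    (f := u ℓ) (f' := ud ℓ) (a := s) (b := x) (C := 1) ?_ ?_ x ⟨hsx, le_refl _⟩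
  · rw [Real.norm_eq_abs] at hmvt
    have h1 : |u ℓ x| ≤ |u ℓ s| + |u ℓ x - u ℓ s| := by
      calc |u ℓ x| = |u ℓ s + (u ℓ x - u ℓ s)| := by ring_nf
        _ ≤ |u ℓ s| + |u ℓ x - u ℓ s| := abs_add_le _ _
    have h2 := u_small ℓ hs0 hs1
    linarith [hmvt, h1, h2]
  · intro r hr
    exact (hasDerivAt_u ℓ (lt_of_lt_of_le hs0 hr.1)).hasDerivWithinAt
  · intro r hr
    rw [Real.norm_eq_abs]
    exact ud_abs_le_one ℓ (lt_of_lt_of_le hs0 hr.1)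

lemma sb_abs_le_one (ℓ : ℕ) {x : ℝ} (hx : 0 < x) : |sphericalBessel ℓ x| ≤ 1 := by
  have h := u_abs_le_self ℓ hx
  rw [u, abs_mul, abs_of_pos hx] at h
  have h2 : x * |sphericalBessel ℓ x| ≤ x * 1 := by linarith
  exact le_of_mul_le_mul_left h2 hx

noncomputable def jd (ℓ : ℕ) (x : ℝ) : ℝ :=
  (ℓ:ℝ)/x * sphericalBessel ℓ x - sphericalBessel (ℓ+1) x

lemma hasDerivAt_sb (ℓ : ℕ) {x : ℝ} (hx : 0 < x) :
    HasDerivAt (sphericalBessel ℓ) (jd ℓ x) x := by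
  have h1 : HasDerivAt (fun y => u ℓ y / y) ((ud ℓ x * x - u ℓ x * 1)/x^2) x :=
    (hasDerivAt_u ℓ hx).div (hasDerivAt_id x) hx.ne'
  have h2 : HasDerivAt (sphericalBessel ℓ) ((ud ℓ x * x - u ℓ x * 1)/x^2) x := by
    apply h1.congr_of_eventuallyEq
    filter_upwards [ev_ne x hx] with y hy
    rw [u]
    field_simp
  convert h2 using 1
  rw [jd, ud, u, u]
  field_simp
  ring

lemma jd_eq (ℓ : ℕ) {x : ℝ} (hx : 0 < x) :
    jd ℓ x = ud ℓ x / x - sphericalBessel ℓ x / x := by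
  rw [jd, ud, u, u]
  field_simp
  ring

lemma jd_abs_le_two_div (ℓ : ℕ) {x : ℝ} (hx : 0 < x) : |jd ℓ x| ≤ 2/x := by
  rw [jd_eq ℓ hx, ← sub_div, abs_div, abs_of_pos hx]
  apply (div_le_div_iff_of_pos_right hx).mpr
  have h1 := ud_abs_le_one ℓ hx
  have h2 := sb_abs_le_one ℓ hx
  calc |ud ℓ x - sphericalBessel ℓ x| ≤ |ud ℓ x| + |sphericalBessel ℓ x| :=
        abs_sub _ _
    _ ≤ 2 := by linarith

lemma jd_abs_le_two (ℓ : ℕ) {x : ℝ} (hx : 0 < x) : |jd ℓ x| ≤ 2 := by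
  rcases le_or_gt 1 x with h1|h1
  · have := jd_abs_le_two_div ℓ hx
    have h2 : 2/x ≤ 2 := by
      rw [div_le_iff₀ hx]
      nlinarith
    linarith
  · have hmain : |(ℓ:ℝ)/x * sphericalBessel ℓ x| ≤ 1 := by
      cases ℓ with
      | zero => simp
      | succ m =>
        have hsb := sb_small_le (m+1) hx h1.le
        rw [abs_mul, abs_div, abs_of_pos hx, Nat.abs_cast]
        have hpow : x^(m+1) = x * x^m := by ring
        have hxm : x^m ≤ 1 := pow_le_one₀ hx.le h1.le
        have hx' : ((m+1:ℕ):ℝ)/x * |sphericalBessel (m+1) x|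
            ≤ ((m+1:ℕ):ℝ)/x * (2 * cl (m+1) * x^(m+1)) := by
          apply mul_le_mul_of_nonneg_left hsb (by positivity)
        have heq : ((m+1:ℕ):ℝ)/x * (2 * cl (m+1) * x^(m+1))
            = 2*((m:ℝ)+1) * cl (m+1) * x^m := by
          rw [hpow]
          push_cast
          field_simp
        have hcl : 2*((m:ℝ)+1) * cl (m+1) ≤ 1 := by
          rw [cl, mul_one_div, div_le_one (dfacR_pos _)]
          have h3 := dfac_ge (m+1)
          have hcast : ((2*(m+1)+1 : ℕ):ℝ) ≤ (((2*(m+1)+1)‼ : ℕ):ℝ) := by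
            exact_mod_cast h3
          push_cast at hcast
          linarith
        have hclnn : 0 ≤ 2*((m:ℝ)+1) * cl (m+1) :=
          mul_nonneg (by positivity) (cl_pos _).le
        have hfin : 2*((m:ℝ)+1) * cl (m+1) * x^m ≤ 1 := by
          nlinarith [pow_nonneg hx.le m,
            mul_le_mul hcl hxm (pow_nonneg hx.le m) zero_le_one]
        rw [heq] at hx'
        linarith
    have h2 := sb_abs_le_one (ℓ+1) hx
    rw [jd]
    calc |(ℓ:ℝ)/x * sphericalBessel ℓ x - sphericalBessel (ℓ+1) x|
        ≤ |(ℓ:ℝ)/x * sphericalBessel ℓ x| + |sphericalBessel (ℓ+1) x| := abs_sub _ _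
      _ ≤ 2 := by linarith

lemma sb_lip (ℓ : ℕ) {s t : ℝ} (hs : 0 < s) (hst : s ≤ t) :
    |sphericalBessel ℓ t - sphericalBessel ℓ s| ≤ 2/s * (t - s) := by
  have hmvt := norm_image_sub_le_of_norm_deriv_le_segment'
    (f := sphericalBessel ℓ) (f' := jd ℓ) (a := s) (b := t) (C := 2/s) ?_ ?_ t ⟨hst, le_refl _⟩
  · rwa [Real.norm_eq_abs] at hmvt
  · intro r hr
    exact (hasDerivAt_sb ℓ (lt_of_lt_of_le hs hr.1)).hasDerivWithinAt
  · intro r hr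
    rw [Real.norm_eq_abs]
    have h1 := jd_abs_le_two_div ℓ (lt_of_lt_of_le hs hr.1)
    have h2 : 2/r ≤ 2/s := by
      apply div_le_div_of_nonneg_left (by norm_num) hs hr.1
    linarith

lemma self_le_rpow {a α : ℝ} (ha0 : 0 ≤ a) (ha1 : a ≤ 1) (hα0 : 0 < α) (hα1 : α ≤ 1) :
    a ≤ a ^ α := by
  rcases eq_or_lt_of_le ha0 with h|h
  · rw [← h, Real.zero_rpow hα0.ne']
  · calc a = a ^ (1:ℝ) := (Real.rpow_one a).symm
      _ ≤ a ^ α := Real.rpow_le_rpow_of_exponent_ge h ha1 hα1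

lemma min_interp {w R ε α : ℝ} (hw0 : 0 ≤ w) (hw1 : w ≤ 1) (hR : 0 ≤ R)
    (hε0 : 0 < ε) (hα0 : 0 < α) (hαε : α + ε ≤ 1) : min w R ≤ w^α * R^ε := by
  rcases eq_or_lt_of_le hR with h0|hR'
  · rw [← h0, Real.zero_rpow hε0.ne', mul_zero]
    exact min_le_right w 0
  rcases eq_or_lt_of_le hw0 with h|hw0'
  · rw [← h, Real.zero_rpow hα0.ne', zero_mul]
    exact min_le_left 0 R
  rcases le_total w R with hcase|hcase
  · rw [min_eq_left hcase]
    calc w = w ^ (1:ℝ) := (Real.rpow_one w).symm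
      _ ≤ w ^ (α+ε) := Real.rpow_le_rpow_of_exponent_ge hw0' hw1 hαε
      _ = w^α * w^ε := Real.rpow_add hw0' α ε
      _ ≤ w^α * R^ε := by
          apply mul_le_mul_of_nonneg_left ?_ (Real.rpow_nonneg hw0 α)
          exact Real.rpow_le_rpow hw0 hcase hε0.le
  · rw [min_eq_right hcase]
    calc R = R ^ (1:ℝ) := (Real.rpow_one R).symm
      _ = R ^ ((1-ε)+ε) := by norm_num
      _ = R^(1-ε) * R^ε := Real.rpow_add hR' _ _
      _ ≤ w^α * R^ε := by
          apply mul_le_mul_of_nonneg_right ?_ (Real.rpow_nonneg hR ε)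
          calc R^(1-ε) ≤ w^(1-ε) := Real.rpow_le_rpow hR hcase (by linarith)
            _ ≤ w^α := Real.rpow_le_rpow_of_exponent_ge hw0' hw1 (by linarith)

lemma le_min_add_min {Δ b d R : ℝ} (h1 : Δ ≤ b + d) (h2 : Δ ≤ R)
    (hb : 0 ≤ b) (hd : 0 ≤ d) (hR : 0 ≤ R) : Δ ≤ min b R + min d R := by
  rcases le_total b R with h|h <;> rcases le_total d R with h'|h' <;>
    simp only [min_eq_left, min_eq_right, h, h'] <;> linarith

lemma sb_diff_lip (ℓ : ℕ) {p q y : ℝ} (hp : 0 < p) (hq : 0 < q) (hy : 0 < y) :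
    |sphericalBessel ℓ (p*y) - sphericalBessel ℓ (q*y)| ≤ 2*|p - q|/min p q := by
  rcases le_total p q with hpq|hpq
  · have hlip := sb_lip ℓ (mul_pos hp hy) (by nlinarith : p*y ≤ q*y)
    rw [abs_sub_comm]
    have heq : 2/(p*y) * (q*y - p*y) = 2*|p-q|/min p q := by
      rw [min_eq_left hpq, abs_sub_comm, abs_of_nonneg (by linarith : (0:ℝ) ≤ q - p)]
      field_simp
    rw [← heq]
    exact hlip
  · have hlip := sb_lip ℓ (mul_pos hq hy) (by nlinarith : q*y ≤ p*y)
    have heq : 2/(q*y) * (p*y - q*y) = 2*|p-q|/min p q := by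
      rw [min_eq_right hpq, abs_of_nonneg (by linarith : (0:ℝ) ≤ p - q)]
      field_simp
    rw [← heq]
    exact hlip

lemma sb_diff_interp (ℓ : ℕ) {p q y ε α : ℝ} (hp : 0 < p) (hq : 0 < q) (hy : 0 < y)
    (hε0 : 0 < ε) (hα0 : 0 < α) (hαε : α + ε ≤ 1) :
    |sphericalBessel ℓ (p*y) - sphericalBessel ℓ (q*y)| ≤
      (|sphericalBessel ℓ (p*y)|^α + |sphericalBessel ℓ (q*y)|^α)
        * (2*|p - q|/min p q)^ε := by
  set b := |sphericalBessel ℓ (p*y)| with hb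
  set d := |sphericalBessel ℓ (q*y)| with hd
  set R := 2*|p - q|/min p q with hR
  have hm : (0:ℝ) < min p q := lt_min hp hq
  have hR0 : 0 ≤ R := by
    rw [hR]
    positivity
  have h1 : |sphericalBessel ℓ (p*y) - sphericalBessel ℓ (q*y)| ≤ b + d := abs_sub _ _
  have h2 := sb_diff_lip ℓ hp hq hy
  have hb0 : 0 ≤ b := abs_nonneg _
  have hd0 : 0 ≤ d := abs_nonneg _
  have hb1 : b ≤ 1 := sb_abs_le_one ℓ (mul_pos hp hy)
  have hd1 : d ≤ 1 := sb_abs_le_one ℓ (mul_pos hq hy)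
  calc |sphericalBessel ℓ (p*y) - sphericalBessel ℓ (q*y)|
      ≤ min b R + min d R := le_min_add_min h1 h2 hb0 hd0 hR0
    _ ≤ b^α * R^ε + d^α * R^ε :=
        add_le_add (min_interp hb0 hb1 hR0 hε0 hα0 hαε)
          (min_interp hd0 hd1 hR0 hε0 hα0 hαε)
    _ = (b^α + d^α) * R^ε := by ring
end SB

open SB

/-- For `0 < ε < 5/11` there is `C = C(ε) > 0` such that for all `ℓ ∈ ℕ₀` and `p, μ, x, y > 0`,
`|j_ℓ(px)j_ℓ(py) - j_ℓ(√μ x)j_ℓ(√μ y)| ≤ C |p-√μ|^ε (p^{-ε} + μ^{-ε/2})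
  (|j_ℓ(px)|^{1-11ε/5} + |j_ℓ(√μ x)|^{1-11ε/5})(|j_ℓ(py)|^{1-11ε/5} + |j_ℓ(√μ y)|^{1-11ε/5})`. -/
theorem sphericalBessel_product_difference_bound (ε : ℝ) (hε0 : 0 < ε) (hε1 : ε < 5 / 11) :
    ∃ C > (0 : ℝ), ∀ (ℓ : ℕ) (p μ x y : ℝ), 0 < p → 0 < μ → 0 < x → 0 < y →
      |sphericalBessel ℓ (p * x) * sphericalBessel ℓ (p * y) -
        sphericalBessel ℓ (Real.sqrt μ * x) * sphericalBessel ℓ (Real.sqrt μ * y)| ≤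
      C * |p - Real.sqrt μ| ^ ε * (p ^ (-ε) + μ ^ (-ε / 2)) *
        (|sphericalBessel ℓ (p * x)| ^ (1 - 11 * ε / 5) +
          |sphericalBessel ℓ (Real.sqrt μ * x)| ^ (1 - 11 * ε / 5)) *
        (|sphericalBessel ℓ (p * y)| ^ (1 - 11 * ε / 5) +
          |sphericalBessel ℓ (Real.sqrt μ * y)| ^ (1 - 11 * ε / 5)) := by
  refine ⟨4, by norm_num, ?_⟩
  intro ℓ p μ x y hp hμ hx hy
  have hq : 0 < Real.sqrt μ := Real.sqrt_pos.mpr hμ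
  set q := Real.sqrt μ with hqdef
  set α := 1 - 11 * ε / 5 with hαdef
  have hα0 : 0 < α := by rw [hαdef]; linarith
  have hαε : α + ε ≤ 1 := by rw [hαdef]; linarith
  have hε1' : ε ≤ 1 := by linarith
  have hm : (0:ℝ) < min p q := lt_min hp hq
  have hax := sb_abs_le_one ℓ (mul_pos hp hx)
  have hdy := sb_abs_le_one ℓ (mul_pos hq hy)
  have hΔy := sb_diff_interp ℓ (ε := ε) (α := α) hp hq hy hε0 hα0 hαε
  have hΔx := sb_diff_interp ℓ (ε := ε) (α := α) hp hq hx hε0 hα0 hαε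
  set A := sphericalBessel ℓ (p*x) with hA
  set B := sphericalBessel ℓ (p*y) with hB
  set C' := sphericalBessel ℓ (q*x) with hC
  set D' := sphericalBessel ℓ (q*y) with hD
  set Tx := |A|^α + |C'|^α with hTx
  set Ty := |B|^α + |D'|^α with hTy
  have hTx0 : 0 ≤ Tx :=
    add_nonneg (Real.rpow_nonneg (abs_nonneg _) _) (Real.rpow_nonneg (abs_nonneg _) _)
  have hTy0 : 0 ≤ Ty :=
    add_nonneg (Real.rpow_nonneg (abs_nonneg _) _) (Real.rpow_nonneg (abs_nonneg _) _)
  set R := 2*|p - q|/min p q with hRdef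
  have hR0 : 0 ≤ R := div_nonneg (by positivity) hm.le
  have hRε : 0 ≤ R^ε := Real.rpow_nonneg hR0 ε
  have step1 : |A*B - C'*D'| ≤ |A| * |B - D'| + |D'| * |A - C'| := by
    have heq : A*B - C'*D' = A*(B - D') + D'*(A - C') := by ring
    rw [heq]
    calc |A*(B-D') + D'*(A-C')| ≤ |A*(B-D')| + |D'*(A-C')| := abs_add_le _ _
      _ = |A| * |B-D'| + |D'| * |A-C'| := by rw [abs_mul, abs_mul]
  have step2 : |A| * |B - D'| ≤ |A|^α * (Ty * R^ε) :=
    mul_le_mul (self_le_rpow (abs_nonneg A) hax hα0 (by linarith)) hΔy (abs_nonneg _)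
      (Real.rpow_nonneg (abs_nonneg _) _)
  have step3 : |D'| * |A - C'| ≤ |D'|^α * (Tx * R^ε) :=
    mul_le_mul (self_le_rpow (abs_nonneg D') hdy hα0 (by linarith)) hΔx (abs_nonneg _)
      (Real.rpow_nonneg (abs_nonneg _) _)
  have step4 : |A|^α * (Ty * R^ε) + |D'|^α * (Tx * R^ε) ≤ 2 * (Tx * Ty) * R^ε := by
    have e1 : |A|^α ≤ Tx := le_add_of_nonneg_right (Real.rpow_nonneg (abs_nonneg _) _)
    have e2 : |D'|^α ≤ Ty := le_add_of_nonneg_left (Real.rpow_nonneg (abs_nonneg _) _)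
    have t1 : |A|^α * (Ty*R^ε) ≤ Tx * (Ty*R^ε) :=
      mul_le_mul_of_nonneg_right e1 (mul_nonneg hTy0 hRε)
    have t2 : |D'|^α * (Tx*R^ε) ≤ Ty * (Tx*R^ε) :=
      mul_le_mul_of_nonneg_right e2 (mul_nonneg hTx0 hRε)
    calc |A|^α * (Ty * R^ε) + |D'|^α * (Tx * R^ε)
        ≤ Tx*(Ty*R^ε) + Ty*(Tx*R^ε) := add_le_add t1 t2
      _ = 2 * (Tx * Ty) * R^ε := by ring
  have hTle : R^ε ≤ 2 * (|p - q|^ε * (p^(-ε) + μ^(-ε/2))) := by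
    have h1 : R = 2 * |p-q| * (min p q)⁻¹ := by rw [hRdef]; ring
    rw [h1, Real.mul_rpow (by positivity) (by positivity : (0:ℝ) ≤ (min p q)⁻¹),
        Real.mul_rpow (by norm_num) (abs_nonneg _),
        Real.inv_rpow hm.le, ← Real.rpow_neg hm.le]
    have h2 : (2:ℝ)^ε ≤ 2 := by
      calc (2:ℝ)^ε ≤ (2:ℝ)^(1:ℝ) := Real.rpow_le_rpow_of_exponent_le one_le_two hε1'
        _ = 2 := Real.rpow_one 2
    have h3 : (min p q)^(-ε) ≤ p^(-ε) + μ^(-ε/2) := by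
      rcases min_choice p q with h|h <;> rw [h]
      · exact le_add_of_nonneg_right (Real.rpow_nonneg hμ.le _)
      · have hqe : q^(-ε) = μ^(-ε/2) := by
          rw [hqdef, Real.sqrt_eq_rpow, ← Real.rpow_mul hμ.le,
            show (1/2 : ℝ) * -ε = -ε/2 from by ring]
        rw [hqe]
        exact le_add_of_nonneg_left (Real.rpow_nonneg hp.le _)
    have hpq : 0 ≤ |p-q|^ε := Real.rpow_nonneg (abs_nonneg _) ε
    have hmin : 0 ≤ (min p q)^(-ε) := Real.rpow_nonneg hm.le _
    have h2nn : (0:ℝ) ≤ (2:ℝ)^ε := Real.rpow_nonneg (by norm_num) _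
    nlinarith [mul_le_mul h2 (mul_le_mul_of_nonneg_left h3 hpq)
      (mul_nonneg hpq hmin) (by norm_num : (0:ℝ) ≤ 2)]
  calc |A*B - C'*D'| ≤ |A| * |B - D'| + |D'| * |A - C'| := step1
    _ ≤ |A|^α * (Ty * R^ε) + |D'|^α * (Tx * R^ε) := add_le_add step2 step3
    _ ≤ 2 * (Tx * Ty) * R^ε := step4
    _ ≤ 2 * (Tx * Ty) * (2 * (|p - q|^ε * (p^(-ε) + μ^(-ε/2)))) :=
        mul_le_mul_of_nonneg_left hTle (by positivity)
    _ = 4 * |p - q|^ε * (p^(-ε) + μ^(-ε/2)) * Tx * Ty := by ring
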